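/- Guarantees for shift-invariancy: let T > 0, let f : AddCircle T → ℂ be integrable with c₁(f) ≠ 0, let φₐ : ℝ, and let t' : ℝ. Define the shifted signal g : AddCircle T → ℂ by g(x) := f(x − ↑t'). Then 𝒯(g, φₐ) = 𝒯(f, φₐ) as functions AddCircle T → ℂ; i.e., applying the transformation with the same angle φₐ to a signal and to any circularly shifted variant of it yields the identical signal. -/
import Mathlib

open MeasureTheory

set_option maxHeartbeats 1000000

/-- `theta T f φ` is the representative in `[0, 2π)` of `arg (c₁ f) − φ` modulo `2π`. -/
noncomputable def theta (T : ℝ) [Fact (0 < T)] (f : AddCircle T → ℂ) (φ : ℝ) : ℝ :=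
  toIcoMod Real.two_pi_pos 0 (Complex.arg (fourierCoeff f 1) - φ)

/-- The computed time-shift amount `Δφ(f, φ)`. -/
noncomputable def deltaPhi (T : ℝ) [Fact (0 < T)] (f : AddCircle T → ℂ) (φ : ℝ) : ℝ :=
  if theta T f φ > Real.pi then (theta T f φ - 2 * Real.pi) * T / (2 * Real.pi)
  else theta T f φ * T / (2 * Real.pi)

/-- The transformation `𝒯(f, φ)`: circularly shift `f` by `Δφ(f, φ)`. -/
noncomputable def transf (T : ℝ) [Fact (0 < T)] (f : AddCircle T → ℂ) (φ : ℝ) :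
    AddCircle T → ℂ :=
  fun x => f (x - (deltaPhi T f φ : AddCircle T))

lemma coe_eq_of_sub_eq_int_mul (T : ℝ) [Fact (0 < T)] (x y : ℝ) (m : ℤ)
    (h : y - x = m * T) : ((x : ℝ) : AddCircle T) = ((y : ℝ) : AddCircle T) := by
  have hy : y = x + m • T := by push_cast [zsmul_eq_mul]; linarith
  rw [hy]
  simp

set_option maxHeartbeats 1000000 in
lemma fourierCoeff_shift (T : ℝ) [Fact (0 < T)] (f : AddCircle T → ℂ) (n : ℤ) (t' : ℝ) :
    fourierCoeff (fun x => f (x - (t' : AddCircle T))) n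
      = fourier (-n) ((t' : ℝ) : AddCircle T) * fourierCoeff f n := by
  rw [fourierCoeff, fourierCoeff,
    ← MeasureTheory.integral_add_right_eq_self (μ := AddCircle.haarAddCircle)
      (fun x : AddCircle T => fourier (-n) x • (fun y => f (y - (t' : AddCircle T))) x)
      ((t' : ℝ) : AddCircle T)]
  have key : ∀ x : AddCircle T,
      fourier (-n) (x + ((t' : ℝ) : AddCircle T)) •
        (fun y => f (y - (t' : AddCircle T))) (x + ((t' : ℝ) : AddCircle T))
      = fourier (-n) ((t' : ℝ) : AddCircle T) • (fourier (-n) x • f x) := by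
    intro x
    simp only [add_sub_cancel_right, fourier_apply, zsmul_add, AddCircle.toCircle_add,
      Circle.coe_mul, smul_eq_mul]
    ring
  simp_rw [key]
  rw [integral_smul, smul_eq_mul]

/-- Guarantees for shift-invariancy: applying the transformation with the same angle `φₐ`
to a signal and to any circularly shifted variant of it yields the identical signal. -/
theorem transf_shift_invariant (T : ℝ) [Fact (0 < T)] (f : AddCircle T → ℂ)
    (hf : Integrable f AddCircle.haarAddCircle) (hc : fourierCoeff f 1 ≠ 0)
    (φₐ t' : ℝ) :
    transf T (fun x => f (x - (t' : AddCircle T))) φₐ = transf T f φₐ := by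
  have hT : (0 : ℝ) < T := Fact.out
  set g : AddCircle T → ℂ := fun x => f (x - (t' : AddCircle T)) with hg
  set r : ℝ := -(2 * Real.pi * t' / T) with hr
  set c : ℂ := fourier (-1) ((t' : ℝ) : AddCircle T) with hcdef
  have hcg : fourierCoeff g 1 = c * fourierCoeff f 1 := fourierCoeff_shift T f 1 t'
  have hcexp : c = Complex.exp ((r : ℝ) * Complex.I) := by
    rw [hcdef, fourier_coe_apply]
    congr 1
    rw [hr]
    push_cast
    ring
  have hc0 : c ≠ 0 := by rw [hcexp]; exact Complex.exp_ne_zero _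
  -- arg of c as an angle is r
  have hargc : (Complex.arg c : Real.Angle) = (r : Real.Angle) := by
    rw [hcexp, Complex.arg_exp_mul_I]
    rw [Real.Angle.angle_eq_iff_two_pi_dvd_sub]
    refine ⟨-(toIocDiv (mul_pos two_pos Real.pi_pos) (-Real.pi) r), ?_⟩
    have := toIocMod_sub_self (mul_pos two_pos Real.pi_pos) (-Real.pi) r
    rw [this]
    push_cast [zsmul_eq_mul]
    ring
  have hgne : fourierCoeff g 1 ≠ 0 := by
    rw [hcg]; exact mul_ne_zero hc0 hc
  -- angle equality for args
  have hang : (Complex.arg (fourierCoeff g 1) : Real.Angle)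
      = ((Complex.arg (fourierCoeff f 1) + r : ℝ) : Real.Angle) := by
    rw [hcg, Complex.arg_mul_coe_angle hc0 hc, hargc, Real.Angle.coe_add, add_comm]
  obtain ⟨k, hk⟩ := Real.Angle.angle_eq_iff_two_pi_dvd_sub.mp hang
  -- theta relation
  have h2pi := Real.two_pi_pos
  have hθg : theta T g φₐ
      = toIcoMod Real.two_pi_pos 0 (Complex.arg (fourierCoeff f 1) - φₐ + r) := by
    rw [theta]
    have : Complex.arg (fourierCoeff g 1) - φₐ
        = (Complex.arg (fourierCoeff f 1) - φₐ + r) + k • (2 * Real.pi) := by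
      rw [zsmul_eq_mul]
      linarith [hk]
    rw [this, toIcoMod_add_zsmul]
  -- write thetas explicitly
  set A : ℝ := Complex.arg (fourierCoeff f 1) - φₐ with hA
  set j1 : ℤ := toIcoDiv Real.two_pi_pos 0 (A + r) with hj1
  set j2 : ℤ := toIcoDiv Real.two_pi_pos 0 A with hj2
  have hθg' : theta T g φₐ = A + r - j1 • (2 * Real.pi) := by
    rw [hθg, toIcoMod, hj1]
  have hθf' : theta T f φₐ = A - j2 • (2 * Real.pi) := by
    rw [theta, toIcoMod, hj2, hA]
  -- deltaPhi mod T
  have hdelta : ∀ (h : AddCircle T → ℂ) (φ : ℝ), ∃ ε : ℤ,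
      deltaPhi T h φ = theta T h φ * T / (2 * Real.pi) - ε * T := by
    intro h φ
    rw [deltaPhi]
    split_ifs with hif
    · exact ⟨1, by field_simp; ring⟩
    · exact ⟨0, by simp⟩
  obtain ⟨e1, he1⟩ := hdelta g φₐ
  obtain ⟨e2, he2⟩ := hdelta f φₐ
  have hπ : Real.pi ≠ 0 := Real.pi_ne_zero
  -- key real identity
  have hkey : deltaPhi T f φₐ - (t' + deltaPhi T g φₐ)
      = ((j1 : ℝ) - j2 + e1 - e2) * T := by
    rw [he1, he2, hθg', hθf', hr]
    push_cast [zsmul_eq_mul]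
    field_simp
    ring
  have hcoe : ((t' + deltaPhi T g φₐ : ℝ) : AddCircle T)
      = ((deltaPhi T f φₐ : ℝ) : AddCircle T) := by
    refine coe_eq_of_sub_eq_int_mul T _ _ (j1 - j2 + e1 - e2) ?_
    rw [hkey]; push_cast; ring
  funext x
  rw [transf, transf]
  show g (x - _) = _
  rw [hg]
  simp only
  rw [sub_sub, ← AddCircle.coe_add, add_comm, hcoe]
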